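/- Let K ≥ 2, let π = π_D be the uniform distribution on A = {1,…,K}, and let the environment have deterministic rewards r_Φ(a) = 1 for all a (so σ²_Φ ≡ 0 and v^π_Φ = 1). Then for every n ≥ 1 the regression estimator satisfies MSE(v̂_Reg) ≥ (Σ_a π(a) p_{a,n})² = (1 − 1/K)^{2n} ≥ e^{−2n/(K−1)}, while sup over environments Φ with 0 ≤ r_Φ ≤ 1 and σ²_Φ = 0 of MSE(v̂_LR) = sup of V₂/n ≤ 1/n, where V₂ = Σ_a π(a)² r_Φ(a)²/π_D(a) − (v^π_Φ)². -/

import Mathlib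

open MeasureTheory ProbabilityTheory ENNReal Filter

noncomputable section

namespace OffPolicy

variable {K : ℕ}

/-- `π` is a probability mass function on the action set. -/
def IsPolicy (π : Fin K → ℝ) : Prop := (∀ a, 0 ≤ π a) ∧ ∑ a, π a = 1

/-- A behavior policy: a pmf with everywhere positive probabilities. -/
def IsBehaviorPolicy (πD : Fin K → ℝ) : Prop := (∀ a, 0 < πD a) ∧ ∑ a, πD a = 1

/-- The joint distribution of a single pair `(A, R)` with `A ~ πD` and `R ~ Φ(·|A)`. -/
def jointMeasure (πD : Fin K → ℝ) (Φ : Fin K → ProbabilityMeasure ℝ) :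
    Measure (Fin K × ℝ) :=
  ∑ a : Fin K, (πD a).toNNReal • ((Measure.dirac a).prod (Φ a : Measure ℝ))

instance jointMeasure_finite (πD : Fin K → ℝ) (Φ : Fin K → ProbabilityMeasure ℝ) :
    IsFiniteMeasure (jointMeasure πD Φ) := by
  unfold jointMeasure
  infer_instance

/-- The distribution of the i.i.d. dataset `D^n = ((A_1,R_1),…,(A_n,R_n))`. -/
def dataMeasure (n : ℕ) (πD : Fin K → ℝ) (Φ : Fin K → ProbabilityMeasure ℝ) :
    Measure (Fin n → Fin K × ℝ) :=
  Measure.pi fun _ => jointMeasure πD Φ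

/-- Mean reward `r_Φ(a)` of action `a`. -/
def envMean (Φ : Fin K → ProbabilityMeasure ℝ) (a : Fin K) : ℝ :=
  ∫ x, x ∂(Φ a : Measure ℝ)

/-- Reward variance `σ²_Φ(a)` of action `a`. -/
def envVar (Φ : Fin K → ProbabilityMeasure ℝ) (a : Fin K) : ℝ :=
  ∫ x, (x - envMean Φ a) ^ 2 ∂(Φ a : Measure ℝ)

/-- The value `v^π_Φ = Σ_a π(a) r_Φ(a)` of the target policy. -/
def value (π : Fin K → ℝ) (Φ : Fin K → ProbabilityMeasure ℝ) : ℝ :=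
  ∑ a, π a * envMean Φ a

/-- Mean squared error `E[(v̂(D^n) − v^π_Φ)²]` of an estimator. -/
def mse (n : ℕ) (π πD : Fin K → ℝ) (Φ : Fin K → ProbabilityMeasure ℝ)
    (est : (Fin n → Fin K × ℝ) → ℝ) : ℝ≥0∞ :=
  ∫⁻ d, ENNReal.ofReal ((est d - value π Φ) ^ 2) ∂(dataMeasure n πD Φ)

/-- Environments with square-integrable rewards, means within `[0, Rmax]`,
and variances bounded by `σ2`. -/
def ValidEnv (Rmax : ℝ) (σ2 : Fin K → ℝ) (Φ : Fin K → ProbabilityMeasure ℝ) : Prop :=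
  (∀ a, MemLp (fun x => x) 2 (Φ a : Measure ℝ)) ∧
  (∀ a, 0 ≤ envMean Φ a ∧ envMean Φ a ≤ Rmax) ∧
  (∀ a, envVar Φ a ≤ σ2 a)

/-- Minimax risk `R_n^*(π, πD, Rmax, σ²)`. -/
def minimaxRisk (n : ℕ) (π πD : Fin K → ℝ) (Rmax : ℝ) (σ2 : Fin K → ℝ) : ℝ≥0∞ :=
  ⨅ (est : (Fin n → Fin K × ℝ) → ℝ) (_ : Measurable est),
    ⨆ (Φ : Fin K → ProbabilityMeasure ℝ) (_ : ValidEnv Rmax σ2 Φ), mse n π πD Φ est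

/-- The likelihood ratio estimator. -/
def vLR (n : ℕ) (π πD : Fin K → ℝ) (d : Fin n → Fin K × ℝ) : ℝ :=
  (1 / (n : ℝ)) * ∑ i, (π (d i).1 / πD (d i).1) * (d i).2

/-- `n(a)`: the number of samples of action `a` in the dataset. -/
def cnt (n : ℕ) (d : Fin n → Fin K × ℝ) (a : Fin K) : ℕ :=
  (Finset.univ.filter fun i => (d i).1 = a).card

/-- `r̂(a) = R(a)/n(a)` if `n(a) > 0`, and `0` otherwise (division by zero is zero). -/
def rhat (n : ℕ) (d : Fin n → Fin K × ℝ) (a : Fin K) : ℝ :=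
  if 0 < cnt n d a then
    (∑ i ∈ Finset.univ.filter (fun i => (d i).1 = a), (d i).2) / (cnt n d a : ℝ)
  else 0

/-- The regression estimator. -/
def vReg (n : ℕ) (π : Fin K → ℝ) (d : Fin n → Fin K × ℝ) : ℝ :=
  ∑ a, π a * rhat n d a

lemma prob_eq_dirac {μ : Measure ℝ} [IsProbabilityMeasure μ] {m : ℝ}
    (h : ∀ᵐ x ∂μ, x = m) : μ = Measure.dirac m := by
  have h2 : μ = Measure.map (fun _ => m) μ := by
    rw [show μ = Measure.map id μ from (Measure.map_id).symm]
    nth_rewrite 2 [Measure.map_id]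
    exact Measure.map_congr (h.mono fun x hx => hx)
  rw [h2, Measure.map_const]; simp

lemma jointMeasure_eq {K : ℕ} (πD : Fin K → ℝ) (Φ : Fin K → ProbabilityMeasure ℝ)
    (m : Fin K → ℝ) (hΦ : ∀ a, (Φ a : Measure ℝ) = Measure.dirac (m a)) :
    jointMeasure πD Φ = ∑ a, (πD a).toNNReal • Measure.dirac (a, m a) := by
  unfold jointMeasure
  refine Finset.sum_congr rfl fun a _ => ?_
  rw [hΦ a, Measure.dirac_prod_dirac]

lemma dataMeasure_eq {K n : ℕ} (πD : Fin K → ℝ) (Φ : Fin K → ProbabilityMeasure ℝ)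
    (m : Fin K → ℝ) (hΦ : ∀ a, (Φ a : Measure ℝ) = Measure.dirac (m a)) :
    dataMeasure n πD Φ = ∑ f : Fin n → Fin K,
      (∏ i, ((πD (f i)).toNNReal : ℝ≥0∞)) • Measure.dirac (fun i => (f i, m (f i))) := by
  unfold dataMeasure
  refine Measure.pi_eq fun s hs => ?_
  have key : ∀ i : Fin n, jointMeasure πD Φ (s i)
      = ∑ b : Fin K, ((πD b).toNNReal : ℝ≥0∞) * (s i).indicator 1 (b, m b) := by
    intro i
    rw [jointMeasure_eq πD Φ m hΦ]
    simp only [Measure.coe_finset_sum, Finset.sum_apply, Measure.smul_apply, Measure.dirac_apply' _ (hs i),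
      ENNReal.smul_def, smul_eq_mul]
  rw [Finset.prod_congr rfl fun i _ => key i, Fintype.prod_sum
    (fun (i : Fin n) (b : Fin K) => ((πD b).toNNReal : ℝ≥0∞) * (s i).indicator 1 (b, m b))]
  simp only [Measure.coe_finset_sum, Finset.sum_apply, Measure.smul_apply, smul_eq_mul,
    Measure.dirac_apply' _ (MeasurableSet.univ_pi hs)]
  refine Finset.sum_congr rfl fun f _ => ?_
  have : (Set.pi Set.univ s).indicator (1 : (Fin n → Fin K × ℝ) → ℝ≥0∞)
      (fun i => (f i, m (f i))) = ∏ i, (s i).indicator 1 (f i, m (f i)) := by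
    by_cases h : ∀ i, (f i, m (f i)) ∈ s i
    · rw [Set.indicator_of_mem (by simpa [Set.mem_pi] using h)]
      simp [Set.indicator_of_mem, h]
    · push_neg at h
      obtain ⟨i, hi⟩ := h
      rw [Set.indicator_of_notMem (by simp [Set.mem_pi]; exact ⟨i, hi⟩)]
      exact (Finset.prod_eq_zero (Finset.mem_univ i) (by simp [Set.indicator_of_notMem hi])).symm
  rw [this, Finset.prod_mul_distrib]

lemma mse_eq {K n : ℕ} (π πD : Fin K → ℝ) (hπD : ∀ a, 0 ≤ πD a)
    (Φ : Fin K → ProbabilityMeasure ℝ) (m : Fin K → ℝ)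
    (hΦ : ∀ a, (Φ a : Measure ℝ) = Measure.dirac (m a)) (est : (Fin n → Fin K × ℝ) → ℝ) :
    mse n π πD Φ est = ENNReal.ofReal (∑ f : Fin n → Fin K,
      (∏ i, πD (f i)) * (est (fun i => (f i, m (f i))) - value π Φ) ^ 2) := by
  unfold mse
  rw [dataMeasure_eq πD Φ m hΦ, lintegral_finset_sum_measure]
  simp only [lintegral_smul_measure, lintegral_dirac]
  rw [ENNReal.ofReal_sum_of_nonneg
    (fun f _ => mul_nonneg (Finset.prod_nonneg fun i _ => hπD _) (sq_nonneg _))]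
  refine Finset.sum_congr rfl fun f _ => ?_
  rw [ENNReal.ofReal_mul (Finset.prod_nonneg fun i _ => hπD _)]
  congr 1
  rw [ENNReal.ofReal_prod_of_nonneg (fun i _ => hπD _)]
  rfl


-- variance of iid sum, combinatorially
lemma variance_sum_aux {K n : ℕ} (hK : 0 < K) (hn : 1 ≤ n) (c : Fin K → ℝ)
    (hc : ∑ a, c a = 0) :
    ∑ f : Fin n → Fin K, ((1/(K:ℝ)))^n * ((1/(n:ℝ)) * ∑ i, c (f i))^2
      = ((1/(K:ℝ)) * ∑ a, (c a)^2) / n := by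
  have hKne : (K:ℝ) ≠ 0 := Nat.cast_ne_zero.2 hK.ne'
  have hnne : (n:ℝ) ≠ 0 := Nat.cast_ne_zero.2 (by omega)
  have key : ∀ i j : Fin n, (∑ f : Fin n → Fin K, (1/(K:ℝ))^n * (c (f i) * c (f j)))
      = if i = j then (1/(K:ℝ)) * ∑ a, (c a)^2 else 0 := by
    intro i j
    have step : ∀ f : Fin n → Fin K, (1/(K:ℝ))^n * (c (f i) * c (f j))
        = ∏ k, ((1/(K:ℝ)) * ((if k = i then c (f k) else 1) * (if k = j then c (f k) else 1))) := by
      intro f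
      rw [Finset.prod_mul_distrib, Finset.prod_mul_distrib, Finset.prod_const,
        Finset.prod_ite_eq' Finset.univ i (fun k => c (f k)),
        Finset.prod_ite_eq' Finset.univ j (fun k => c (f k))]
      simp [Finset.card_univ]
    rw [Finset.sum_congr rfl fun f _ => step f,
      ← Fintype.prod_sum (fun (k : Fin n) (b : Fin K) =>
        (1/(K:ℝ)) * ((if k = i then c b else 1) * (if k = j then c b else 1)))]
    by_cases hij : i = j
    · subst hij
      have hfac : ∀ k : Fin n, (∑ b, (1/(K:ℝ)) * ((if k = i then c b else 1) * (if k = i then c b else 1)))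
          = if k = i then (1/(K:ℝ)) * ∑ a, (c a)^2 else 1 := by
        intro k
        by_cases hk : k = i
        · subst hk
          simp only [if_pos rfl, ← Finset.mul_sum]
          congr 1
          exact Finset.sum_congr rfl fun b _ => (sq (c b)).symm ▸ (pow_two (c b)).symm
        · simp only [if_neg hk, mul_one, Finset.sum_const, Finset.card_univ, Fintype.card_fin, nsmul_eq_mul]
          field_simp
      rw [Finset.prod_congr rfl fun k _ => hfac k, Finset.prod_ite_eq' Finset.univ i
        (fun _ => (1/(K:ℝ)) * ∑ a, (c a)^2), if_pos (Finset.mem_univ i), if_pos rfl]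
    · rw [if_neg hij]
      refine Finset.prod_eq_zero (Finset.mem_univ i) ?_
      simp [hij, ← Finset.mul_sum, hc]
  have expand : ∀ f : Fin n → Fin K,
      (1/(K:ℝ))^n * ((1/(n:ℝ)) * ∑ i, c (f i))^2
        = (1/(n:ℝ))^2 * ∑ i, ∑ j, (1/(K:ℝ))^n * (c (f i) * c (f j)) := by
    intro f
    rw [mul_pow, sq (∑ i, c (f i)), Finset.sum_mul_sum]
    simp only [Finset.mul_sum]
    exact Finset.sum_congr rfl fun i _ => Finset.sum_congr rfl fun j _ => by ring
  rw [Finset.sum_congr rfl fun f _ => expand f, ← Finset.mul_sum, Finset.sum_comm]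
  have swap2 : ∀ i : Fin n, (∑ f : Fin n → Fin K, ∑ j, (1/(K:ℝ))^n * (c (f i) * c (f j)))
      = ∑ j, ∑ f : Fin n → Fin K, (1/(K:ℝ))^n * (c (f i) * c (f j)) :=
    fun i => Finset.sum_comm
  rw [Finset.sum_congr rfl fun i _ => swap2 i]
  rw [Finset.sum_congr rfl fun i _ => Finset.sum_congr rfl fun j _ => key i j]
  simp only [Finset.sum_ite_eq, Finset.mem_univ, if_true, Finset.sum_const,
    Finset.card_univ, Fintype.card_fin, nsmul_eq_mul]
  field_simp

lemma rhat_one {K n : ℕ} (f : Fin n → Fin K) (a : Fin K) :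
    rhat n (fun i => (f i, (1:ℝ))) a
      = if 0 < cnt n (fun i => (f i, (1:ℝ))) a then 1 else 0 := by
  unfold rhat
  split_ifs with h
  · have hnum : (∑ i ∈ Finset.univ.filter (fun i => ((fun i => (f i,(1:ℝ))) i).1 = a),
        ((fun i => (f i,(1:ℝ))) i).2) = (cnt n (fun i => (f i,(1:ℝ))) a : ℝ) := by
      simp [cnt]
    rw [hnum, div_self (Nat.cast_ne_zero.2 h.ne')]
  · rfl

lemma indicator_prod {K n : ℕ} (f : Fin n → Fin K) (a : Fin K) :
    (if cnt n (fun i => (f i, (1:ℝ))) a = 0 then (1:ℝ) else 0)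
      = ∏ i, (if f i = a then (0:ℝ) else 1) := by
  by_cases h : ∀ i, f i ≠ a
  · rw [if_pos, Finset.prod_congr rfl fun i _ => if_neg (h i), Finset.prod_const_one]
    unfold cnt
    rw [Finset.card_eq_zero, Finset.filter_eq_empty_iff]
    exact fun i _ => h i
  · push_neg at h
    obtain ⟨i, hi⟩ := h
    have hcnt : cnt n (fun i => (f i, (1:ℝ))) a ≠ 0 := by
      unfold cnt
      exact Finset.card_ne_zero_of_mem (Finset.mem_filter.2 ⟨Finset.mem_univ i, hi⟩)
    rw [if_neg hcnt]
    exact (Finset.prod_eq_zero (f := fun k => if f k = a then (0:ℝ) else 1) (Finset.mem_univ i) (if_pos hi)).symm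

lemma env_dirac {K : ℕ} (Φ' : Fin K → ProbabilityMeasure ℝ)
    (h2 : ∀ a, MemLp (fun x => x) 2 (Φ' a : Measure ℝ))
    (hv : ∀ a, envVar Φ' a = 0) (a : Fin K) :
    (Φ' a : Measure ℝ) = Measure.dirac (envMean Φ' a) := by
  set m := envMean Φ' a with hm
  have hInt : Integrable (fun x => (x - m)^2) (Φ' a : Measure ℝ) :=
    ((h2 a).sub (memLp_const m)).integrable_sq
  have h0 : ∀ᵐ x ∂(Φ' a : Measure ℝ), (x - m)^2 = 0 := by
    have hvv := hv a
    unfold envVar at hvv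
    rw [← hm] at hvv
    exact (integral_eq_zero_iff_of_nonneg (fun x => sq_nonneg _) hInt).1 hvv
  refine prob_eq_dirac ?_
  filter_upwards [h0] with x hx
  have h1 := pow_eq_zero_iff (n := 2) (by norm_num) |>.1 hx
  linarith [sub_eq_zero.1 h1]

lemma exp_le_pow {K n : ℕ} (hK : 2 ≤ K) :
    Real.exp (-2 * (n : ℝ) / ((K : ℝ) - 1)) ≤ (1 - 1 / (K : ℝ)) ^ (2 * n) := by
  have hK1 : (1:ℝ) ≤ (K:ℝ) - 1 := by
    have : (2:ℝ) ≤ (K:ℝ) := by exact_mod_cast hK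
    linarith
  have hKpos : (0:ℝ) < (K:ℝ) := by linarith
  have hK1pos : (0:ℝ) < (K:ℝ) - 1 := by linarith
  set x := 1 / ((K:ℝ) - 1) with hx
  have hxpos : 0 < x := by positivity
  have hbase : Real.exp (-x) ≤ 1 - 1 / (K:ℝ) := by
    have h1 : 1 + x ≤ Real.exp x := by
      have := Real.add_one_le_exp x
      linarith
    have h2 : Real.exp (-x) = (Real.exp x)⁻¹ := Real.exp_neg x
    have h3 : (Real.exp x)⁻¹ ≤ (1 + x)⁻¹ := by
      apply inv_anti₀ (by positivity) h1
    have h4 : (1 + x)⁻¹ = 1 - 1 / (K:ℝ) := by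
      rw [hx]
      field_simp
      ring
    rw [h2, ← h4]
    exact h3
  calc Real.exp (-2 * (n : ℝ) / ((K : ℝ) - 1))
      = Real.exp ((2*n : ℕ) * (-x)) := by
        congr 1
        rw [hx]
        push_cast
        ring
    _ = Real.exp (-x) ^ (2*n) := Real.exp_nat_mul _ _
    _ ≤ (1 - 1 / (K:ℝ)) ^ (2*n) := pow_le_pow_left₀ (Real.exp_nonneg _) hbase _

set_option maxHeartbeats 800000 in
lemma part2 {K n : ℕ} (hK : 2 ≤ K) (hn : 1 ≤ n) (Φ' : Fin K → ProbabilityMeasure ℝ)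
    (hL : ∀ a, MemLp (fun x => x) 2 (Φ' a : Measure ℝ))
    (hvz : ∀ a, envVar Φ' a = 0) :
    mse n (fun _ => 1/(K:ℝ)) (fun _ => 1/(K:ℝ)) Φ'
        (vLR n (fun _ => 1/(K:ℝ)) (fun _ => 1/(K:ℝ))) =
      ENNReal.ofReal (((∑ a, ((1:ℝ)/(K:ℝ)) ^ 2 * envMean Φ' a ^ 2 /
          ((1:ℝ)/(K:ℝ))) - value (fun _ => 1/(K:ℝ)) Φ' ^ 2) / n) := by
  have hKpos : 0 < K := by omega
  have hKRpos : (0:ℝ) < (K:ℝ) := by exact_mod_cast hKpos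
  have hKne : (K:ℝ) ≠ 0 := ne_of_gt hKRpos
  have hnpos : (0:ℝ) < (n:ℝ) := by exact_mod_cast Nat.lt_of_lt_of_le Nat.zero_lt_one hn
  have hnne : (n:ℝ) ≠ 0 := ne_of_gt hnpos
  have hdir : ∀ a, (Φ' a : Measure ℝ) = Measure.dirac (envMean Φ' a) :=
    env_dirac Φ' hL hvz
  rw [mse_eq _ _ (fun a => by positivity) Φ' (fun a => envMean Φ' a) hdir]
  congr 1
  have hvdef : value (fun _ => 1/(K:ℝ)) Φ' = ∑ a, (1/(K:ℝ)) * envMean Φ' a := rfl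
  set v := value (fun _ => 1/(K:ℝ)) Φ' with hv
  have hsum_m : ∑ a, envMean Φ' a = (K:ℝ) * v := by
    rw [hvdef, ← Finset.mul_sum]
    field_simp
  have hvLR : ∀ f : Fin n → Fin K,
      vLR n (fun _ => 1/(K:ℝ)) (fun _ => 1/(K:ℝ)) (fun i => (f i, envMean Φ' (f i))) - v
        = (1/(n:ℝ)) * ∑ i, (envMean Φ' (f i) - v) := by
    intro f
    unfold vLR
    simp only
    have e : ∀ i : Fin n, ((1/(K:ℝ))/(1/(K:ℝ))) * envMean Φ' (f i) = envMean Φ' (f i) :=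
      fun i => by rw [div_self (by positivity), one_mul]
    rw [Finset.sum_congr rfl fun i _ => e i]
    rw [Finset.sum_sub_distrib, mul_sub, Finset.sum_const, Finset.card_univ,
      Fintype.card_fin, nsmul_eq_mul]
    have h5 : (1/(n:ℝ)) * ((n:ℝ) * v) = v := by field_simp
    rw [h5]
  have step1 : ∀ f : Fin n → Fin K, (∏ _i : Fin n, ((1:ℝ)/(K:ℝ)))
        * (vLR n (fun _ => 1/(K:ℝ)) (fun _ => 1/(K:ℝ)) (fun i => (f i, envMean Φ' (f i))) - v)^2
      = (1/(K:ℝ))^n * ((1/(n:ℝ)) * ∑ i, (envMean Φ' (f i) - v))^2 := by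
    intro f
    rw [Finset.prod_const, Finset.card_univ, Fintype.card_fin, hvLR f]
  rw [Finset.sum_congr rfl fun f _ => step1 f]
  have hc : ∑ a, (envMean Φ' a - v) = 0 := by
    rw [Finset.sum_sub_distrib, hsum_m, Finset.sum_const, Finset.card_univ,
      Fintype.card_fin, nsmul_eq_mul]
    ring
  have hvar := variance_sum_aux (n := n) hKpos hn (fun a => envMean Φ' a - v) hc
  rw [hvar]
  congr 1
  have hexp : ∑ a, (envMean Φ' a - v)^2 = (∑ a, (envMean Φ' a)^2) - (K:ℝ)*v^2 := by
    have e : ∀ a : Fin K, (envMean Φ' a - v)^2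
        = (envMean Φ' a)^2 - 2*v*(envMean Φ' a) + v^2 := fun a => by ring
    rw [Finset.sum_congr rfl fun a _ => e a, Finset.sum_add_distrib,
      Finset.sum_sub_distrib, ← Finset.mul_sum, hsum_m, Finset.sum_const,
      Finset.card_univ, Fintype.card_fin, nsmul_eq_mul]
    ring
  have e2 : ∀ a : Fin K, ((1:ℝ)/(K:ℝ)) ^ 2 * envMean Φ' a ^ 2 / ((1:ℝ)/(K:ℝ))
      = (1/(K:ℝ)) * envMean Φ' a ^ 2 := fun a => by
    field_simp
  rw [hexp, Finset.sum_congr rfl fun a _ => e2 a, ← Finset.mul_sum]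
  field_simp

lemma part1 {K n : ℕ} (hK : 2 ≤ K) (hn : 1 ≤ n) (Φ : Fin K → ProbabilityMeasure ℝ)
    (hΦ : ∀ a, (Φ a : Measure ℝ) = Measure.dirac (1 : ℝ)) :
    ENNReal.ofReal ((∑ _a : Fin K, (1/(K:ℝ)) * (1 - 1/(K:ℝ)) ^ n) ^ 2)
      ≤ mse n (fun _ => 1/(K:ℝ)) (fun _ => 1/(K:ℝ)) Φ (vReg n (fun _ => 1/(K:ℝ))) := by
  have hKpos : 0 < K := by omega
  have hKRpos : (0:ℝ) < (K:ℝ) := by exact_mod_cast hKpos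
  have hKne : (K:ℝ) ≠ 0 := ne_of_gt hKRpos
  rw [mse_eq _ _ (fun a => by positivity) Φ (fun _ => (1:ℝ)) hΦ]
  apply ENNReal.ofReal_le_ofReal
  have hmean : ∀ a, envMean Φ a = 1 := by
    intro a
    unfold envMean
    rw [hΦ a, integral_dirac]
  have hval : value (fun _ => 1/(K:ℝ)) Φ = 1 := by
    unfold value
    rw [Finset.sum_congr rfl fun a _ => by rw [hmean a]]
    simp only [mul_one, Finset.sum_const, Finset.card_univ, Fintype.card_fin, nsmul_eq_mul]
    field_simp
  set G : (Fin n → Fin K) → ℝ := fun f =>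
    ∑ a, (1/(K:ℝ)) * (if cnt n (fun i => (f i, (1:ℝ))) a = 0 then 1 else 0) with hG
  have hvv : ∀ f : Fin n → Fin K,
      vReg n (fun _ => 1/(K:ℝ)) (fun i => (f i, (1:ℝ))) = 1 - G f := by
    intro f
    unfold vReg
    have key : ∀ a : Fin K, (fun _ => 1/(K:ℝ)) a * rhat n (fun i => (f i,(1:ℝ))) a
        = 1/(K:ℝ) - (1/(K:ℝ)) * (if cnt n (fun i => (f i,(1:ℝ))) a = 0 then 1 else 0) := by
      intro a
      simp only
      rw [rhat_one f a]
      rcases Nat.eq_zero_or_pos (cnt n (fun i => (f i,(1:ℝ))) a) with h|h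
      · simp [h]
      · simp [h, Nat.pos_iff_ne_zero.1 h]
    rw [Finset.sum_congr rfl fun a _ => key a, Finset.sum_sub_distrib, hG,
      Finset.sum_const, Finset.card_univ, Fintype.card_fin, nsmul_eq_mul]
    congr 1
    field_simp
  have hsq : ∀ f : Fin n → Fin K,
      (∏ _i : Fin n, ((1:ℝ)/(K:ℝ)))
        * (vReg n (fun _ => 1/(K:ℝ)) (fun i => (f i, (1:ℝ))) - value (fun _ => 1/(K:ℝ)) Φ)^2
      = (1/(K:ℝ))^n * (G f)^2 := by
    intro f
    rw [Finset.prod_const, Finset.card_univ, Fintype.card_fin, hval, hvv f]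
    ring
  rw [Finset.sum_congr rfl fun f _ => hsq f]
  have hmeanG : ∑ f : Fin n → Fin K, (1/(K:ℝ))^n * G f
      = ∑ _a : Fin K, (1/(K:ℝ)) * (1 - 1/(K:ℝ))^n := by
    rw [hG]
    simp only [Finset.mul_sum]
    rw [Finset.sum_comm]
    refine Finset.sum_congr rfl fun a _ => ?_
    have e : ∀ f : Fin n → Fin K,
        (1/(K:ℝ))^n * ((1/(K:ℝ)) * (if cnt n (fun i => (f i,(1:ℝ))) a = 0 then 1 else 0))
          = (1/(K:ℝ)) * ∏ i, ((1/(K:ℝ)) * (if f i = a then 0 else 1)) := by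
      intro f
      rw [indicator_prod f a, Finset.prod_mul_distrib, Finset.prod_const,
        Finset.card_univ, Fintype.card_fin]
      ring
    rw [Finset.sum_congr rfl fun f _ => e f, ← Finset.mul_sum,
      ← Fintype.prod_sum (fun (_i : Fin n) (b : Fin K) => (1/(K:ℝ)) * (if b = a then 0 else 1))]
    have hcol : (∑ b : Fin K, (1/(K:ℝ)) * (if b = a then 0 else 1)) = 1 - 1/(K:ℝ) := by
      have e2 : ∀ b : Fin K, (1/(K:ℝ)) * (if b = a then (0:ℝ) else 1)
          = 1/(K:ℝ) - (if b = a then 1/(K:ℝ) else 0) := fun b => by split_ifs <;> ring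
      rw [Finset.sum_congr rfl fun b _ => e2 b, Finset.sum_sub_distrib,
        Finset.sum_ite_eq' Finset.univ a (fun _ => 1/(K:ℝ)), if_pos (Finset.mem_univ a),
        Finset.sum_const, Finset.card_univ, Fintype.card_fin, nsmul_eq_mul]
      field_simp
    rw [Finset.prod_const, Finset.card_univ, Fintype.card_fin, hcol]
  have hwnn : (0:ℝ) ≤ (1/(K:ℝ))^n := by positivity
  have hCS : (∑ f : Fin n → Fin K, (1/(K:ℝ))^n * G f)^2
      ≤ ∑ f : Fin n → Fin K, (1/(K:ℝ))^n * (G f)^2 := by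
    have h := Finset.sum_mul_sq_le_sq_mul_sq Finset.univ
      (fun _f : Fin n → Fin K => Real.sqrt ((1/(K:ℝ))^n))
      (fun f => Real.sqrt ((1/(K:ℝ))^n) * G f)
    simp only [mul_pow, Real.sq_sqrt hwnn] at h
    have e1 : ∀ f : Fin n → Fin K,
        Real.sqrt ((1/(K:ℝ))^n) * (Real.sqrt ((1/(K:ℝ))^n) * G f) = (1/(K:ℝ))^n * G f :=
      fun f => by rw [← mul_assoc, Real.mul_self_sqrt hwnn]
    rw [Finset.sum_congr rfl fun f _ => e1 f] at h
    have e2 : ∑ _f : Fin n → Fin K, (1/(K:ℝ))^n = 1 := by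
      rw [Finset.sum_const, Finset.card_univ, Fintype.card_fun, Fintype.card_fin,
        Fintype.card_fin, nsmul_eq_mul]
      push_cast
      rw [← mul_pow, mul_one_div_cancel hKne, one_pow]
    rw [e2, one_mul] at h
    exact h
  calc (∑ _a : Fin K, (1/(K:ℝ)) * (1 - 1/(K:ℝ)) ^ n) ^ 2
      = (∑ f : Fin n → Fin K, (1/(K:ℝ))^n * G f)^2 := by rw [hmeanG]
    _ ≤ ∑ f : Fin n → Fin K, (1/(K:ℝ))^n * (G f)^2 := hCS
/-- construction in Theorem 2 (ii): for `K ≥ 2`, `π = π_D`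
uniform and deterministic rewards `Φ(·|a) = δ_1` (so `r_Φ ≡ 1`, `σ²_Φ ≡ 0`,
`v^π_Φ = 1`), for every `n ≥ 1`:
`MSE(v̂_Reg) ≥ (Σ_a π(a) p_{a,n})² = (1 − 1/K)^{2n} ≥ e^{−2n/(K−1)}`; moreover,
for every environment `Φ'` with `0 ≤ r_{Φ'} ≤ 1` and `σ²_{Φ'} = 0`,
`MSE(v̂_LR) = V₂/n` with `V₂ = Σ_a π(a)² r_{Φ'}(a)²/π_D(a) − (v^π_{Φ'})²`, and the
supremum of `MSE(v̂_LR)` over such environments is at most `1/n`. -/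
theorem vReg_vs_vLR_uniform_deterministic {K : ℕ} (hK : 2 ≤ K) (n : ℕ) (hn : 1 ≤ n)
    (π πD : Fin K → ℝ) (hπ : π = fun _ => 1 / (K : ℝ)) (hπD : πD = fun _ => 1 / (K : ℝ))
    (Φ : Fin K → ProbabilityMeasure ℝ)
    (hΦ : ∀ a, (Φ a : Measure ℝ) = Measure.dirac (1 : ℝ)) :
    (ENNReal.ofReal ((∑ a, π a * (1 - πD a) ^ n) ^ 2) ≤ mse n π πD Φ (vReg n π) ∧
      (∑ a, π a * (1 - πD a) ^ n) ^ 2 = (1 - 1 / (K : ℝ)) ^ (2 * n) ∧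
      Real.exp (-2 * (n : ℝ) / ((K : ℝ) - 1)) ≤ (1 - 1 / (K : ℝ)) ^ (2 * n)) ∧
    (∀ Φ' : Fin K → ProbabilityMeasure ℝ,
        (∀ a, MemLp (fun x => x) 2 (Φ' a : Measure ℝ)) →
        (∀ a, 0 ≤ envMean Φ' a ∧ envMean Φ' a ≤ 1) →
        (∀ a, envVar Φ' a = 0) →
        mse n π πD Φ' (vLR n π πD) =
          ENNReal.ofReal (((∑ a, π a ^ 2 * envMean Φ' a ^ 2 / πD a) - value π Φ' ^ 2) / n)) ∧
    (⨆ (Φ' : Fin K → ProbabilityMeasure ℝ)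
        (_ : (∀ a, MemLp (fun x => x) 2 (Φ' a : Measure ℝ)) ∧
          (∀ a, 0 ≤ envMean Φ' a ∧ envMean Φ' a ≤ 1) ∧ (∀ a, envVar Φ' a = 0)),
        mse n π πD Φ' (vLR n π πD)) ≤ ENNReal.ofReal (1 / (n : ℝ)) := by

  subst hπ hπD
  have hKpos : 0 < K := by omega
  have hKRpos : (0:ℝ) < (K:ℝ) := by exact_mod_cast hKpos
  have hKne : (K:ℝ) ≠ 0 := ne_of_gt hKRpos
  have hnpos : (0:ℝ) < (n:ℝ) := by exact_mod_cast Nat.lt_of_lt_of_le Nat.zero_lt_one hn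
  have hsum1 : (∑ a : Fin K, (fun _ => 1/(K:ℝ)) a * (1 - (fun _ => 1/(K:ℝ)) a) ^ n)
      = (1 - 1/(K:ℝ)) ^ n := by
    simp only [Finset.sum_const, Finset.card_univ, Fintype.card_fin, nsmul_eq_mul]
    field_simp
  refine ⟨⟨?_, ?_, exp_le_pow hK⟩, ?_, ?_⟩
  · exact part1 hK hn Φ hΦ
  · rw [hsum1, ← pow_mul, Nat.mul_comm n 2]
  · intro Φ' hL hmr hvz
    exact part2 hK hn Φ' hL hvz
  · refine iSup_le fun Φ' => iSup_le fun h => ?_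
    obtain ⟨hL, hmr, hvz⟩ := h
    rw [part2 hK hn Φ' hL hvz]
    apply ENNReal.ofReal_le_ofReal
    have hnum : (∑ a, ((1:ℝ)/(K:ℝ)) ^ 2 * envMean Φ' a ^ 2 / ((1:ℝ)/(K:ℝ)))
        - value (fun _ => 1/(K:ℝ)) Φ' ^ 2 ≤ 1 := by
      have h1 : ∀ a : Fin K, ((1:ℝ)/(K:ℝ)) ^ 2 * envMean Φ' a ^ 2 / ((1:ℝ)/(K:ℝ))
          ≤ 1/(K:ℝ) := by
        intro a
        obtain ⟨h0, h1⟩ := hmr a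
        have hm2 : envMean Φ' a ^ 2 ≤ 1 := by nlinarith
        have : ((1:ℝ)/(K:ℝ)) ^ 2 * envMean Φ' a ^ 2 / ((1:ℝ)/(K:ℝ))
            = (1/(K:ℝ)) * envMean Φ' a ^ 2 := by field_simp
        rw [this]
        nlinarith [one_div_pos.2 hKRpos]
      have h2 := Finset.sum_le_sum (fun a (_ : a ∈ Finset.univ) => h1 a)
      rw [Finset.sum_const, Finset.card_univ, Fintype.card_fin, nsmul_eq_mul] at h2
      have h3 : (K:ℝ) * (1/(K:ℝ)) = 1 := by field_simp
      nlinarith [sq_nonneg (value (fun _ => 1/(K:ℝ)) Φ')]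
    gcongr


end OffPolicy
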